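/- arXiv:0706.4101 — 4 statements merged into one kernel-verified Lean document; each statement's English description precedes it below -/
import Mathlib

section
/- Let G be a graph on n ≥ 1 vertices with e edges and m triangles. Then G contains a bipartite subgraph with at least 4e^2/n^2 - 6m/n edges, i.e., b(G) ≥ 4e^2/n^2 - 6m/n. -/
open Finset

namespace SimpleGraph

variable {V : Type*} [Fintype V] [DecidableEq V] (G : SimpleGraph V) [DecidableRel G.Adj]

/-- The number of edges of `G` crossing the cut `(S, Sᶜ)`. -/
def cutSize (S : Finset V) : ℕ :=
  ((S ×ˢ Sᶜ).filter fun p => G.Adj p.1 p.2).card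

/-- `b(G)`: the maximum number of edges in a bipartite subgraph of `G`,
equivalently the maximum over vertex subsets `S` of the number of edges
between `S` and its complement. -/
def maxCut : ℕ := Finset.univ.sup fun S : Finset V => G.cutSize S

/-- The number of edges of `G` with both endpoints in `S`. -/
def spanEdges (S : Finset V) : ℕ :=
  (G.edgeFinset.filter fun e => e ∈ S.sym2).card

end SimpleGraph

namespace SimpleGraph
variable {V : Type*} [Fintype V] [DecidableEq V] (G : SimpleGraph V) [DecidableRel G.Adj]

set_option linter.unusedSectionVars false

lemma cutSize_eq_sum (S : Finset V) :
    G.cutSize S = ∑ u ∈ S, (Sᶜ.filter (G.Adj u)).card := by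
  unfold cutSize
  rw [Finset.card_filter, Finset.sum_product]
  exact Finset.sum_congr rfl fun u _ => (Finset.card_filter _ _).symm

lemma filter_split (S : Finset V) (u : V) :
    (Sᶜ.filter (G.Adj u)).card + (S.filter (G.Adj u)).card = G.degree u := by
  rw [← G.card_neighborFinset_eq_degree, neighborFinset_eq_filter,
    ← Finset.card_union_of_disjoint (Finset.disjoint_filter_filter disjoint_compl_left),
    ← Finset.filter_union,
    show Sᶜ ∪ S = (univ : Finset V) by ext v; simp; tauto]


lemma cut_add_inner (x : V) :
    G.cutSize (G.neighborFinset x) +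
      (∑ u ∈ G.neighborFinset x, ((G.neighborFinset x).filter (G.Adj u)).card) =
      ∑ u ∈ G.neighborFinset x, G.degree u := by
  rw [cutSize_eq_sum, ← Finset.sum_add_distrib]
  exact Finset.sum_congr rfl fun u _ => G.filter_split _ u

lemma sum_deg_nbhd :
    ∑ x : V, ∑ u ∈ G.neighborFinset x, G.degree u = ∑ u : V, G.degree u ^ 2 := by
  simp_rw [neighborFinset_eq_filter, Finset.sum_filter]
  rw [Finset.sum_comm]
  refine Finset.sum_congr rfl fun u _ => ?_
  have : ∀ x : V, (if G.Adj x u then G.degree u else 0)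
      = (if G.Adj u x then G.degree u else 0) := fun x => if_congr (G.adj_comm x u) rfl rfl
  simp_rw [this, ← Finset.sum_filter, Finset.sum_const, ← neighborFinset_eq_filter,
    card_neighborFinset_eq_degree, smul_eq_mul, sq]


lemma sum_inner_eq_triples :
    ∑ x : V, ∑ u ∈ G.neighborFinset x, ((G.neighborFinset x).filter (G.Adj u)).card =
      (univ.filter fun t : V × V × V =>
        G.Adj t.1 t.2.1 ∧ G.Adj t.1 t.2.2 ∧ G.Adj t.2.1 t.2.2).card := by
  rw [Finset.card_filter]
  simp only [Fintype.sum_prod_type]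
  refine Finset.sum_congr rfl fun x _ => ?_
  rw [neighborFinset_eq_filter, Finset.sum_filter]
  refine Finset.sum_congr rfl fun u _ => ?_
  by_cases h : G.Adj x u
  · rw [if_pos h, Finset.filter_filter, Finset.card_filter]
    refine Finset.sum_congr rfl fun v _ => ?_
    simp [h]
  · simp [h]

lemma fiber_card (s : Finset V) (hs : s ∈ G.cliqueFinset 3) :
    ((univ.filter fun t : V × V × V =>
        G.Adj t.1 t.2.1 ∧ G.Adj t.1 t.2.2 ∧ G.Adj t.2.1 t.2.2).filter
      (fun t => ({t.1, t.2.1, t.2.2} : Finset V) = s)).card = 6 := by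
  rw [mem_cliqueFinset_iff, is3Clique_iff] at hs
  obtain ⟨a, b, c, hab, hac, hbc, rfl⟩ := hs
  have hab' := hab.ne
  have hac' := hac.ne
  have hbc' := hbc.ne
  have key : ((univ.filter fun t : V × V × V =>
        G.Adj t.1 t.2.1 ∧ G.Adj t.1 t.2.2 ∧ G.Adj t.2.1 t.2.2).filter
      (fun t => ({t.1, t.2.1, t.2.2} : Finset V) = {a, b, c})) =
      {(a,b,c),(a,c,b),(b,a,c),(b,c,a),(c,a,b),(c,b,a)} := by
    ext ⟨x, u, v⟩
    simp only [Finset.mem_filter, Finset.mem_univ, true_and, Finset.mem_insert,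
      Finset.mem_singleton, Prod.mk.injEq]
    constructor
    · rintro ⟨⟨hxu, hxv, huv⟩, hset⟩
      have hx : x = a ∨ x = b ∨ x = c := by
        have : x ∈ ({a, b, c} : Finset V) := hset ▸ (by simp)
        simpa using this
      have hu : u = a ∨ u = b ∨ u = c := by
        have : u ∈ ({a, b, c} : Finset V) := hset ▸ (by simp)
        simpa using this
      have hv : v = a ∨ v = b ∨ v = c := by
        have : v ∈ ({a, b, c} : Finset V) := hset ▸ (by simp)
        simpa using this
      have h1 := hxu.ne
      have h2 := hxv.ne
      have h3 := huv.ne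
      rcases hx with rfl|rfl|rfl <;> rcases hu with rfl|rfl|rfl <;>
        rcases hv with rfl|rfl|rfl <;> simp_all
    · rintro (⟨rfl,rfl,rfl⟩|⟨rfl,rfl,rfl⟩|⟨rfl,rfl,rfl⟩|⟨rfl,rfl,rfl⟩|⟨rfl,rfl,rfl⟩|⟨rfl,rfl,rfl⟩) <;>
        refine ⟨⟨?_, ?_, ?_⟩, by ext w; simp; try tauto⟩ <;>
        solve_by_elim [SimpleGraph.Adj.symm]
  rw [key]
  repeat rw [Finset.card_insert_of_notMem (by simp_all [Prod.ext_iff])]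
  rw [Finset.card_singleton]

lemma triples_eq_six_mul :
    (univ.filter fun t : V × V × V =>
        G.Adj t.1 t.2.1 ∧ G.Adj t.1 t.2.2 ∧ G.Adj t.2.1 t.2.2).card =
      6 * (G.cliqueFinset 3).card := by
  rw [Finset.card_eq_sum_card_fiberwise
    (f := fun t : V × V × V => ({t.1, t.2.1, t.2.2} : Finset V)) (t := G.cliqueFinset 3)
    (fun t ht => by
      simp only [Finset.coe_filter, Set.mem_setOf_eq] at ht
      rw [Finset.mem_coe, mem_cliqueFinset_iff]
      exact is3Clique_triple_iff.2 ht.2)]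
  rw [Finset.sum_congr rfl (fun s hs => G.fiber_card s hs), Finset.sum_const, smul_eq_mul,
    mul_comm]

lemma key_nat : ∑ u : V, G.degree u ^ 2 =
    (∑ x : V, G.cutSize (G.neighborFinset x)) + 6 * (G.cliqueFinset 3).card := by
  rw [← G.sum_deg_nbhd, ← G.triples_eq_six_mul, ← G.sum_inner_eq_triples,
    ← Finset.sum_add_distrib]
  exact Finset.sum_congr rfl fun x _ => (G.cut_add_inner x).symm

lemma sum_cut_le : ∑ x : V, G.cutSize (G.neighborFinset x) ≤ Fintype.card V * G.maxCut := by
  calc ∑ x : V, G.cutSize (G.neighborFinset x)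
      ≤ ∑ _x : V, G.maxCut :=
        Finset.sum_le_sum fun x _ => Finset.le_sup (Finset.mem_univ _)
    _ = Fintype.card V * G.maxCut := by
        rw [Finset.sum_const, smul_eq_mul, Finset.card_univ]

end SimpleGraph


/-- A graph on `n ≥ 1` vertices with `e` edges and `m` triangles contains a bipartite
subgraph with at least `4e²/n² - 6m/n` edges. -/
theorem max_cut_lower_bound_triangles {V : Type*} [Fintype V] [DecidableEq V]
    (G : SimpleGraph V) [DecidableRel G.Adj] (hn : 1 ≤ Fintype.card V) :
    4 * (G.edgeFinset.card : ℝ) ^ 2 / (Fintype.card V : ℝ) ^ 2 -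
      6 * ((G.cliqueFinset 3).card : ℝ) / (Fintype.card V : ℝ) ≤ G.maxCut := by
  have hn0 : (0 : ℝ) < (Fintype.card V : ℝ) := by exact_mod_cast hn
  set n : ℝ := (Fintype.card V : ℝ) with hndef
  set e : ℝ := (G.edgeFinset.card : ℝ)
  set m : ℝ := ((G.cliqueFinset 3).card : ℝ)
  set M : ℝ := (G.maxCut : ℝ)
  have hM : (0 : ℝ) ≤ M := by positivity
  have hm : (0 : ℝ) ≤ m := by positivity
  have hdeg : (∑ u : V, (G.degree u : ℝ)) = 2 * e := by
    rw_mod_cast [G.sum_degrees_eq_twice_card_edges]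
    push_cast
    ring
  have cs : (∑ u : V, (G.degree u : ℝ)) ^ 2 ≤ n * ∑ u : V, (G.degree u : ℝ) ^ 2 := by
    have := sq_sum_le_card_mul_sum_sq (s := (univ : Finset V))
      (f := fun u => (G.degree u : ℝ))
    simpa [Finset.card_univ] using this
  have hkey : (∑ u : V, (G.degree u : ℝ) ^ 2) ≤ n * M + 6 * m := by
    have h1 := G.key_nat
    have h2 := G.sum_cut_le
    have : (∑ u : V, G.degree u ^ 2 : ℝ) ≤
        (Fintype.card V * G.maxCut + 6 * (G.cliqueFinset 3).card : ℕ) := by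
      exact_mod_cast h1 ▸ Nat.add_le_add_right h2 _
    push_cast at this
    convert this using 2 <;> push_cast <;> ring
  have h4 : 4 * e ^ 2 ≤ n * (n * M + 6 * m) := by
    have : (2 * e) ^ 2 ≤ n * (n * M + 6 * m) := by
      calc (2 * e) ^ 2 = (∑ u : V, (G.degree u : ℝ)) ^ 2 := by rw [hdeg]
        _ ≤ n * ∑ u : V, (G.degree u : ℝ) ^ 2 := cs
        _ ≤ n * (n * M + 6 * m) := by
            exact mul_le_mul_of_nonneg_left hkey (le_of_lt hn0)
    nlinarith [this]
  rw [sub_le_iff_le_add, div_le_iff₀ (by positivity : (0 : ℝ) < n ^ 2)]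
  have hexp : (M + 6 * m / n) * n ^ 2 = n * (n * M + 6 * m) := by
    field_simp
  rw [hexp]
  exact h4
end

section
/- Let G be a K4-free graph on n ≥ 1 vertices with e edges. Then G contains a bipartite subgraph with at least 2e/7 + 8e^2/(7n^2) edges, i.e., b(G) ≥ 2e/7 + 8e^2/(7n^2). -/
open Finset

set_option linter.unusedSectionVars false

namespace K4Aux

variable {V : Type*} [Fintype V] [DecidableEq V] (G : SimpleGraph V) [DecidableRel G.Adj]

/-- ordered count of adjacent pairs from A to B -/
def cnt (A B : Finset V) : ℕ := ((A ×ˢ B).filter fun p => G.Adj p.1 p.2).card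

lemma cnt_eq_sum_left (A B : Finset V) :
    cnt G A B = ∑ a ∈ A, (B.filter fun b => G.Adj a b).card := by
  classical
  unfold cnt
  rw [Finset.card_eq_sum_card_fiberwise (f := Prod.fst) (t := A)
    (fun p hp => (Finset.mem_product.mp (Finset.mem_filter.mp hp).1).1)]
  refine Finset.sum_congr rfl fun a ha => ?_
  apply Finset.card_bij (fun p _ => p.2)
  · rintro ⟨x, y⟩ hp
    simp only [Finset.mem_filter, Finset.mem_product] at hp ⊢
    obtain ⟨⟨⟨_, hy⟩, hadj⟩, rfl⟩ := hp
    exact ⟨hy, hadj⟩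
  · rintro ⟨x, y⟩ hp ⟨x', y'⟩ hp' h
    simp only [Finset.mem_filter, Finset.mem_product] at hp hp'
    simp only at h
    rw [Prod.ext_iff]
    exact ⟨hp.2.trans hp'.2.symm, h⟩
  · intro b hb
    simp only [Finset.mem_filter] at hb
    exact ⟨(a, b), by simp [Finset.mem_filter, Finset.mem_product, hb.1, hb.2, ha], rfl⟩

lemma cnt_comm (A B : Finset V) : cnt G A B = cnt G B A := by
  unfold cnt
  apply Finset.card_bij (fun p _ => (p.2, p.1))
  · rintro ⟨x, y⟩ hp
    simp only [Finset.mem_filter, Finset.mem_product] at hp ⊢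
    exact ⟨⟨hp.1.2, hp.1.1⟩, hp.2.symm⟩
  · rintro ⟨x, y⟩ _ ⟨x', y'⟩ _ h
    simpa [Prod.ext_iff, and_comm] using h
  · rintro ⟨x, y⟩ hp
    simp only [Finset.mem_filter, Finset.mem_product] at hp
    exact ⟨(y, x), by simp [Finset.mem_filter, Finset.mem_product, hp.1.1, hp.1.2, hp.2.symm], rfl⟩

lemma cnt_eq_sum_right (A B : Finset V) :
    cnt G A B = ∑ b ∈ B, (A.filter fun a => G.Adj a b).card := by
  rw [cnt_comm, cnt_eq_sum_left]
  refine Finset.sum_congr rfl fun b _ => ?_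
  congr 1
  ext a
  simp [G.adj_comm]

lemma cnt_union_right {B₁ B₂ : Finset V} (A : Finset V) (h : Disjoint B₁ B₂) :
    cnt G A (B₁ ∪ B₂) = cnt G A B₁ + cnt G A B₂ := by
  simp only [cnt_eq_sum_left]
  rw [← Finset.sum_add_distrib]
  refine Finset.sum_congr rfl fun a ha => ?_
  rw [Finset.filter_union, Finset.card_union_of_disjoint]
  exact Finset.disjoint_filter_filter h

lemma cnt_union_left {A₁ A₂ : Finset V} (B : Finset V) (h : Disjoint A₁ A₂) :
    cnt G (A₁ ∪ A₂) B = cnt G A₁ B + cnt G A₂ B := by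
  rw [cnt_comm, cnt_union_right G B h, cnt_comm G B A₁, cnt_comm G B A₂]

lemma cnt_mono_right {B₁ B₂ : Finset V} (A : Finset V) (h : B₁ ⊆ B₂) :
    cnt G A B₁ ≤ cnt G A B₂ := by
  apply Finset.card_le_card
  apply Finset.filter_subset_filter
  exact Finset.product_subset_product_right h

lemma cnt_univ_univ : cnt G Finset.univ Finset.univ = 2 * G.edgeFinset.card := by
  rw [cnt_eq_sum_left, ← G.sum_degrees_eq_twice_card_edges]
  refine Finset.sum_congr rfl fun v _ => ?_
  rw [← SimpleGraph.neighborFinset_eq_filter, SimpleGraph.degree]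

lemma cutSize_eq_cnt (S : Finset V) : G.cutSize S = cnt G S Sᶜ := rfl

lemma cutSize_le_maxCut (S : Finset V) : G.cutSize S ≤ G.maxCut :=
  Finset.le_sup (Finset.mem_univ S)

lemma degsum_le (N : Finset V) :
    (∑ a ∈ N, G.degree a) ≤ G.maxCut + cnt G N N := by
  have h2 : cnt G N Finset.univ = ∑ a ∈ N, G.degree a := by
    rw [cnt_eq_sum_left]
    exact Finset.sum_congr rfl fun a _ => by
      rw [← SimpleGraph.neighborFinset_eq_filter, SimpleGraph.degree]
  have h1 : cnt G N Finset.univ = cnt G N N + cnt G N Nᶜ := by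
    rw [← cnt_union_right G N disjoint_compl_right, Finset.union_compl]
  have h3 : cnt G N Nᶜ ≤ G.maxCut := cutSize_le_maxCut G N
  omega

lemma powerset_filter_not_mem (Z : Finset V) (w : V) :
    (Z.powerset.filter fun R => w ∉ R) = (Z.erase w).powerset := by
  ext R
  simp only [Finset.mem_filter, Finset.mem_powerset, Finset.subset_erase]

lemma card_filter_not_mem (Z : Finset V) (w : V) :
    (Z.powerset.filter fun R => w ∉ R).card = 2 ^ (Z.card - 1) ∨ w ∉ Z := by
  by_cases hw : w ∈ Z
  · left
    rw [powerset_filter_not_mem, Finset.card_powerset, Finset.card_erase_of_mem hw]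
  · right; exact hw

lemma card_filter_not_mem' (Z : Finset V) (w : V) (hw : w ∈ Z) :
    (Z.powerset.filter fun R => w ∉ R).card = 2 ^ (Z.card - 1) := by
  rw [powerset_filter_not_mem, Finset.card_powerset, Finset.card_erase_of_mem hw]

lemma card_filter_mem (Z : Finset V) (w : V) (hw : w ∈ Z) :
    (Z.powerset.filter fun R => w ∈ R).card = 2 ^ (Z.card - 1) := by
  have htot := Finset.card_filter_add_card_filter_not
    (s := Z.powerset) (p := fun R => w ∈ R)
  rw [Finset.card_powerset] at htot
  have h2 := card_filter_not_mem' Z w hw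
  have hz : 1 ≤ Z.card := Finset.card_pos.mpr ⟨w, hw⟩
  have hpow : 2 ^ Z.card = 2 ^ (Z.card - 1) * 2 := by
    rw [← pow_succ]
    congr 1
    omega
  have : (Z.powerset.filter fun R => ¬ w ∈ R).card = 2 ^ (Z.card - 1) := h2
  omega

lemma card_filter_mem_not_mem (Z : Finset V) {x w : V} (hx : x ∈ Z) (hw : w ∈ Z)
    (hxw : x ≠ w) :
    (Z.powerset.filter fun R => x ∈ R ∧ w ∉ R).card = 2 ^ (Z.card - 2) := by
  have he : Z.powerset.filter (fun R => x ∈ R ∧ w ∉ R)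
      = (Z.erase w).powerset.filter (fun R => x ∈ R) := by
    ext R
    simp only [Finset.mem_filter, Finset.mem_powerset, Finset.subset_erase]
    tauto
  rw [he, card_filter_mem _ _ (Finset.mem_erase.mpr ⟨hxw, hx⟩),
    Finset.card_erase_of_mem hw]
  rw [Nat.sub_sub]

lemma cut_decomp (N X R : Finset V) (hXN : X ⊆ N) (hR : R ⊆ Nᶜ) :
    G.cutSize (X ∪ R) =
      cnt G X (N \ X) + cnt G X (Nᶜ \ R) + (cnt G R (N \ X) + cnt G R (Nᶜ \ R)) := by
  have hcompl : (X ∪ R)ᶜ = (N \ X) ∪ (Nᶜ \ R) := by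
    ext a
    have h1 : a ∈ X → a ∈ N := fun h => hXN h
    have h2 : a ∈ R → ¬ a ∈ N := fun h => Finset.mem_compl.mp (hR h)
    simp only [Finset.mem_compl, Finset.mem_union, Finset.mem_sdiff]
    tauto
  have hdXR : Disjoint X R := Finset.disjoint_left.mpr
    (fun a haX haR => (Finset.mem_compl.mp (hR haR)) (hXN haX))
  have hdY : Disjoint (N \ X) (Nᶜ \ R) := Finset.disjoint_left.mpr
    (fun a ha hb => (Finset.mem_compl.mp (Finset.mem_sdiff.mp hb).1)
      (Finset.mem_sdiff.mp ha).1)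
  rw [cutSize_eq_cnt, hcompl, cnt_union_left G _ hdXR, cnt_union_right G _ hdY,
    cnt_union_right G _ hdY]

lemma pow_helper1 {z : ℕ} (hz : 1 ≤ z) (c : ℕ) : 2 ^ (z - 1) * (4 * c) = 2 ^ z * (2 * c) := by
  have hp : (2:ℕ) ^ z = 2 ^ (z - 1) * 2 := by
    rw [← pow_succ]
    congr 1
    omega
  rw [hp]; ring

lemma sum_cnt_X_sdiff (Z A : Finset V) :
    ∑ R ∈ Z.powerset, 4 * cnt G A (Z \ R) = 2 ^ Z.card * (2 * cnt G A Z) := by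
  have step : ∀ R ∈ Z.powerset, 4 * cnt G A (Z \ R)
      = ∑ w ∈ Z, (if w ∉ R then 4 * (A.filter fun a => G.Adj a w).card else 0) := by
    intro R _
    rw [cnt_eq_sum_right, Finset.mul_sum, ← Finset.sum_filter, Finset.sdiff_eq_filter]
  rw [Finset.sum_congr rfl step, Finset.sum_comm, cnt_eq_sum_right,
    Finset.mul_sum, Finset.mul_sum]
  refine Finset.sum_congr rfl fun w hw => ?_
  rw [← Finset.sum_filter, Finset.sum_const, card_filter_not_mem' Z w hw, smul_eq_mul]
  exact pow_helper1 (Finset.card_pos.mpr ⟨w, hw⟩) _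

lemma sum_cnt_R_B (Z B : Finset V) :
    ∑ R ∈ Z.powerset, 4 * cnt G R B = 2 ^ Z.card * (2 * cnt G Z B) := by
  have step : ∀ R ∈ Z.powerset, 4 * cnt G R B
      = ∑ x ∈ Z, (if x ∈ R then 4 * (B.filter fun b => G.Adj x b).card else 0) := by
    intro R hR
    rw [cnt_eq_sum_left, Finset.mul_sum, ← Finset.sum_filter,
      Finset.filter_mem_eq_inter, Finset.inter_eq_right.mpr (Finset.mem_powerset.mp hR)]
  rw [Finset.sum_congr rfl step, Finset.sum_comm, cnt_eq_sum_left,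
    Finset.mul_sum, Finset.mul_sum]
  refine Finset.sum_congr rfl fun x hx => ?_
  rw [← Finset.sum_filter, Finset.sum_const, card_filter_mem Z x hx, smul_eq_mul]
  exact pow_helper1 (Finset.card_pos.mpr ⟨x, hx⟩) _

lemma sum_cnt_R_ZR (Z : Finset V) :
    ∑ R ∈ Z.powerset, 4 * cnt G R (Z \ R) = 2 ^ Z.card * cnt G Z Z := by
  have step : ∀ R ∈ Z.powerset, 4 * cnt G R (Z \ R)
      = ∑ p ∈ (Z ×ˢ Z).filter (fun p => G.Adj p.1 p.2),
          (if p.1 ∈ R ∧ p.2 ∉ R then 4 else 0) := by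
    intro R hR
    have hRZ := Finset.mem_powerset.mp hR
    have hset : ((R ×ˢ (Z \ R)).filter fun p => G.Adj p.1 p.2)
        = ((Z ×ˢ Z).filter fun p => G.Adj p.1 p.2).filter
            (fun p => p.1 ∈ R ∧ p.2 ∉ R) := by
      ext p
      simp only [Finset.mem_filter, Finset.mem_product, Finset.mem_sdiff]
      constructor
      · rintro ⟨⟨h1, h2, h3⟩, h4⟩
        exact ⟨⟨⟨hRZ h1, h2⟩, h4⟩, h1, h3⟩
      · rintro ⟨⟨⟨hp1, hp2⟩, h4⟩, h1, h3⟩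
        exact ⟨⟨h1, hp2, h3⟩, h4⟩
    show 4 * ((R ×ˢ (Z \ R)).filter fun p => G.Adj p.1 p.2).card = _
    rw [hset, Finset.card_filter, Finset.mul_sum]
    exact Finset.sum_congr rfl fun p _ => by split <;> simp
  rw [Finset.sum_congr rfl step, Finset.sum_comm]
  have inner : ∀ p ∈ (Z ×ˢ Z).filter (fun p => G.Adj p.1 p.2),
      (∑ R ∈ Z.powerset, if p.1 ∈ R ∧ p.2 ∉ R then (4:ℕ) else 0) = 2 ^ Z.card := by
    intro p hp
    simp only [Finset.mem_filter, Finset.mem_product] at hp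
    have hne : p.1 ≠ p.2 := G.ne_of_adj hp.2
    rw [← Finset.sum_filter, Finset.sum_const,
      card_filter_mem_not_mem Z hp.1.1 hp.1.2 hne, smul_eq_mul]
    have h2z : 2 ≤ Z.card := Finset.one_lt_card.mpr ⟨p.1, hp.1.1, p.2, hp.1.2, hne⟩
    rw [show (4:ℕ) = 2 ^ 2 from rfl, ← pow_add]
    congr 1
    omega
  rw [Finset.sum_congr rfl inner, Finset.sum_const, smul_eq_mul, mul_comm]
  rfl

lemma main_count (N X : Finset V) (hXN : X ⊆ N) :
    cnt G Finset.univ Finset.univ + 4 * cnt G X (N \ X) ≤ 4 * G.maxCut + cnt G N N := by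
  set Z := Nᶜ with hZ
  have hdecomp : ∀ R ∈ Z.powerset, 4 * G.cutSize (X ∪ R) =
      4 * cnt G X (N \ X) + (4 * cnt G X (Z \ R) + (4 * cnt G R (N \ X)
        + 4 * cnt G R (Z \ R))) := by
    intro R hR
    rw [cut_decomp G N X R hXN (Finset.mem_powerset.mp hR)]
    ring
  have hsum : ∑ R ∈ Z.powerset, 4 * G.cutSize (X ∪ R)
      = 2 ^ Z.card * (4 * cnt G X (N \ X) + 2 * cnt G X Z + 2 * cnt G Z (N \ X)
          + cnt G Z Z) := by
    rw [Finset.sum_congr rfl hdecomp, Finset.sum_add_distrib, Finset.sum_add_distrib,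
      Finset.sum_add_distrib, Finset.sum_const, Finset.card_powerset, smul_eq_mul,
      sum_cnt_X_sdiff, sum_cnt_R_B, sum_cnt_R_ZR]
    ring
  have hex : ∃ R ∈ Z.powerset, 4 * cnt G X (N \ X) + 2 * cnt G X Z
      + 2 * cnt G Z (N \ X) + cnt G Z Z ≤ 4 * G.cutSize (X ∪ R) := by
    apply Finset.exists_le_of_sum_le ⟨∅, Finset.empty_mem_powerset Z⟩
    rw [hsum, Finset.sum_const, Finset.card_powerset, smul_eq_mul]
  obtain ⟨R, _, hRK⟩ := hex
  have hb : 4 * cnt G X (N \ X) + 2 * cnt G X Z + 2 * cnt G Z (N \ X) + cnt G Z Z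
      ≤ 4 * G.maxCut := by
    have := cutSize_le_maxCut G (X ∪ R)
    omega
  have e1 : cnt G Finset.univ Finset.univ
      = cnt G N N + cnt G N Z + (cnt G Z N + cnt G Z Z) := by
    have hu : (Finset.univ : Finset V) = N ∪ Z := (Finset.union_compl N).symm
    rw [hu, cnt_union_left G _ disjoint_compl_right,
      cnt_union_right G _ disjoint_compl_right, cnt_union_right G _ disjoint_compl_right]
  have e2 : cnt G N Z = cnt G X Z + cnt G (N \ X) Z := by
    conv_lhs => rw [← Finset.union_sdiff_of_subset hXN]
    exact cnt_union_left G _ Finset.disjoint_sdiff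
  have e3 : cnt G Z N = cnt G Z X + cnt G Z (N \ X) := by
    conv_lhs => rw [← Finset.union_sdiff_of_subset hXN]
    exact cnt_union_right G _ Finset.disjoint_sdiff
  have e4 : cnt G (N \ X) Z = cnt G Z (N \ X) := cnt_comm G _ _
  have e5 : cnt G Z X = cnt G X Z := cnt_comm G _ _
  omega

lemma common_nbhd_indep (hG : G.CliqueFree 4) {v u : V} (h : G.Adj v u) :
    cnt G (G.neighborFinset v ∩ G.neighborFinset u)
      (G.neighborFinset v ∩ G.neighborFinset u) = 0 := by
  unfold cnt
  rw [Finset.card_eq_zero, Finset.filter_eq_empty_iff]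
  rintro ⟨w, w'⟩ hp
  rw [Finset.mem_product] at hp
  simp only [Finset.mem_inter, SimpleGraph.mem_neighborFinset] at hp
  intro hadj
  obtain ⟨⟨hvw, huw⟩, hvw', huw'⟩ := hp
  have hsymm1 := h.symm
  have hsymm2 := hvw.symm
  have hsymm3 := huw.symm
  have hsymm4 := hvw'.symm
  have hsymm5 := huw'.symm
  have hsymm6 := hadj.symm
  have hne1 : v ≠ u := G.ne_of_adj h
  have hne2 : v ≠ w := G.ne_of_adj hvw
  have hne3 : v ≠ w' := G.ne_of_adj hvw'
  have hne4 : u ≠ w := G.ne_of_adj huw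
  have hne5 : u ≠ w' := G.ne_of_adj huw'
  have hne6 : w ≠ w' := G.ne_of_adj hadj
  apply hG {v, u, w, w'}
  constructor
  · intro x hx y hy hxy
    simp only [Finset.coe_insert, Set.mem_insert_iff, Finset.coe_singleton,
      Set.mem_singleton_iff] at hx hy
    rcases hx with rfl | rfl | rfl | rfl <;> rcases hy with rfl | rfl | rfl | rfl <;>
      first
        | exact absurd rfl hxy
        | assumption
  · rw [Finset.card_insert_of_notMem (by simp [hne1, hne2, hne3]),
      Finset.card_insert_of_notMem (by simp [hne4, hne5]),
      Finset.card_insert_of_notMem (by simp [hne6]), Finset.card_singleton]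

lemma exists_good_u {v : V} (hv : (G.neighborFinset v).Nonempty) :
    ∃ u ∈ G.neighborFinset v,
      (cnt G (G.neighborFinset v) (G.neighborFinset v)) ^ 2
        ≤ G.degree v * G.degree v
          * cnt G (G.neighborFinset v ∩ G.neighborFinset u) (G.neighborFinset v) := by
  set N := G.neighborFinset v with hN
  set g : V → ℕ := fun w => (N.filter fun x => G.Adj w x).card with hg
  have hi : cnt G N N = ∑ w ∈ N, g w := cnt_eq_sum_left G N N
  have hii : ∀ u, cnt G (N ∩ G.neighborFinset u) N = ∑ w ∈ N ∩ G.neighborFinset u, g w :=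
    fun u => cnt_eq_sum_left G _ N
  have hiii : ∑ u ∈ N, ∑ w ∈ N ∩ G.neighborFinset u, g w = ∑ w ∈ N, g w * g w := by
    have h1 : ∀ u ∈ N, ∑ w ∈ N ∩ G.neighborFinset u, g w
        = ∑ w ∈ N, if G.Adj u w then g w else 0 := by
      intro u _
      rw [← Finset.sum_filter]
      congr 1
      ext w
      simp only [Finset.mem_inter, Finset.mem_filter, SimpleGraph.mem_neighborFinset]
    rw [Finset.sum_congr rfl h1, Finset.sum_comm]
    refine Finset.sum_congr rfl fun w hw => ?_
    rw [← Finset.sum_filter, Finset.sum_const, smul_eq_mul, mul_comm]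
    congr 1
    rw [hg]
    simp only
    congr 1
    ext u
    simp [G.adj_comm]
  have hcs : (∑ w ∈ N, g w) ^ 2 ≤ N.card * ∑ w ∈ N, g w * g w := by
    have h := sq_sum_le_card_mul_sum_sq (s := N) (f := fun w => (g w : ℝ))
    have h2 : ((∑ w ∈ N, g w : ℕ) : ℝ) ^ 2 ≤ ((N.card * ∑ w ∈ N, g w * g w : ℕ) : ℝ) := by
      push_cast
      simpa [sq] using h
    exact_mod_cast h2
  obtain ⟨u, hu, hmax⟩ := Finset.exists_max_image N
    (fun u => cnt G (N ∩ G.neighborFinset u) N) hv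
  refine ⟨u, hu, ?_⟩
  have hsum_le : ∑ u' ∈ N, cnt G (N ∩ G.neighborFinset u') N
      ≤ N.card * cnt G (N ∩ G.neighborFinset u) N := by
    calc ∑ u' ∈ N, cnt G (N ∩ G.neighborFinset u') N
        ≤ ∑ _u' ∈ N, cnt G (N ∩ G.neighborFinset u) N :=
          Finset.sum_le_sum (fun i hi => hmax i hi)
      _ = N.card * cnt G (N ∩ G.neighborFinset u) N := by
          rw [Finset.sum_const, smul_eq_mul]
  have hdeg : G.degree v = N.card := rfl
  calc (cnt G N N) ^ 2 = (∑ w ∈ N, g w) ^ 2 := by rw [hi]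
    _ ≤ N.card * ∑ w ∈ N, g w * g w := hcs
    _ = N.card * ∑ u' ∈ N, cnt G (N ∩ G.neighborFinset u') N := by
        rw [Finset.sum_congr rfl (fun u' _ => hii u'), hiii]
    _ ≤ N.card * (N.card * cnt G (N ∩ G.neighborFinset u) N) :=
        Nat.mul_le_mul_left _ hsum_le
    _ = G.degree v * G.degree v * cnt G (N ∩ G.neighborFinset u) N := by
        rw [hdeg]; ring

lemma sum_T_eq : ∑ v, ∑ u ∈ G.neighborFinset v, G.degree u
    = ∑ u, G.degree u * G.degree u := by
  have h1 : ∀ v : V, ∑ u ∈ G.neighborFinset v, G.degree u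
      = ∑ u, if G.Adj v u then G.degree u else 0 := by
    intro v
    rw [SimpleGraph.neighborFinset_eq_filter, Finset.sum_filter]
  rw [Finset.sum_congr rfl (fun v _ => h1 v), Finset.sum_comm]
  refine Finset.sum_congr rfl fun u _ => ?_
  rw [← Finset.sum_filter, Finset.sum_const, smul_eq_mul, mul_comm]
  congr 1
  rw [SimpleGraph.degree]
  congr 1
  rw [SimpleGraph.neighborFinset_eq_filter]
  ext x
  simp [G.adj_comm]

lemma deg_cauchy : (2 * G.edgeFinset.card) ^ 2
    ≤ Fintype.card V * ∑ u, G.degree u * G.degree u := by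
  have h := sq_sum_le_card_mul_sum_sq (s := (Finset.univ : Finset V))
    (f := fun w => (G.degree w : ℝ))
  have h2 : ((∑ w, G.degree w : ℕ) : ℝ) ^ 2
      ≤ ((Fintype.card V * ∑ u, G.degree u * G.degree u : ℕ) : ℝ) := by
    push_cast
    simpa [sq, Finset.card_univ] using h
  have h3 : (∑ w, G.degree w) ^ 2 ≤ Fintype.card V * ∑ u, G.degree u * G.degree u := by
    exact_mod_cast h2
  rwa [G.sum_degrees_eq_twice_card_edges] at h3

end K4Aux

set_option maxHeartbeats 1600000 in
/-- A `K₄`-free graph on `n ≥ 1` vertices with `e` edges contains a bipartite subgraph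
with at least `2e/7 + 8e²/(7n²)` edges. -/
theorem K4_free_max_cut_lower_bound {V : Type*} [Fintype V] [DecidableEq V]
    (G : SimpleGraph V) [DecidableRel G.Adj] (hG : G.CliqueFree 4)
    (hn : 1 ≤ Fintype.card V) :
    2 * (G.edgeFinset.card : ℝ) / 7 +
      8 * (G.edgeFinset.card : ℝ) ^ 2 / (7 * (Fintype.card V : ℝ) ^ 2) ≤ G.maxCut := by
  classical
  have hne : Nonempty V := Fintype.card_pos_iff.mp (by omega)
  set n := Fintype.card V with hn_def
  set m := G.edgeFinset.card with hm_def
  set b := G.maxCut with hb_def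
  set Q := ∑ u, G.degree u * G.degree u with hQ_def
  by_cases hm0 : m = 0
  · rw [hm0]
    norm_num
  have hQm : (2 * m) ^ 2 ≤ n * Q := K4Aux.deg_cauchy G
  have hexv : ∃ v ∈ (Finset.univ : Finset V),
      n * (G.degree v * G.degree v) + 2 * Q
        ≤ 3 * n * (∑ u ∈ G.neighborFinset v, G.degree u) := by
    apply Finset.exists_le_of_sum_le Finset.univ_nonempty
    have e1 : ∑ v : V, (n * (G.degree v * G.degree v) + 2 * Q) = 3 * (n * Q) := by
      rw [Finset.sum_add_distrib, Finset.sum_const, ← Finset.mul_sum, Finset.card_univ,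
        smul_eq_mul, ← hQ_def, ← hn_def]
      ring
    have e2 : ∑ v : V, 3 * n * (∑ u ∈ G.neighborFinset v, G.degree u) = 3 * (n * Q) := by
      rw [← Finset.mul_sum, K4Aux.sum_T_eq, ← hQ_def]
      ring
    rw [e1, e2]
  obtain ⟨v, -, hv⟩ := hexv
  set N := G.neighborFinset v with hN_def
  set D := G.degree v with hD_def
  set T := ∑ u ∈ N, G.degree u with hT_def
  set S := K4Aux.cnt G N N with hS_def
  have hQpos : 1 ≤ Q := by
    rcases Nat.eq_zero_or_pos Q with h0 | h1
    · rw [h0, mul_zero] at hQm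
      have : m = 0 := by nlinarith [hQm]
      omega
    · exact h1
  have hTpos : 1 ≤ T := by
    rcases Nat.eq_zero_or_pos T with h0 | h1
    · rw [h0, mul_zero] at hv
      omega
    · exact h1
  have hNne : N.Nonempty := by
    by_contra hemp
    rw [Finset.not_nonempty_iff_eq_empty] at hemp
    have : T = 0 := by rw [hT_def, hemp, Finset.sum_empty]
    omega
  have hD1 : 1 ≤ D := Finset.card_pos.mpr hNne
  obtain ⟨u, hu, hCS⟩ := K4Aux.exists_good_u G hNne
  set X := N ∩ G.neighborFinset u with hX_def
  have hXX : K4Aux.cnt G X X = 0 := K4Aux.common_nbhd_indep G hG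
    (by simpa using hu : G.Adj v u)
  have hXN : X ⊆ N := Finset.inter_subset_left
  set W := K4Aux.cnt G X (N \ X) with hW_def
  have hXsplit : K4Aux.cnt G X N = W := by
    conv_lhs => rw [← Finset.union_sdiff_of_subset hXN]
    rw [K4Aux.cnt_union_right G _ Finset.disjoint_sdiff, hXX, zero_add]
  have hF1 : T ≤ b + S := K4Aux.degsum_le G N
  have hF2 : 2 * m + 4 * W ≤ 4 * b + S := by
    have h := K4Aux.main_count G N X hXN
    rwa [K4Aux.cnt_univ_univ] at h
  have hF3 : S ^ 2 ≤ D * D * W := by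
    rw [← hN_def, ← hD_def, ← hS_def, hXsplit] at hCS
    exact hCS
  have r1 : (T : ℝ) ≤ (b : ℝ) + (S : ℝ) := by exact_mod_cast hF1
  have r2 : 2 * (m : ℝ) + 4 * (W : ℝ) ≤ 4 * (b : ℝ) + (S : ℝ) := by exact_mod_cast hF2
  have r3 : (S : ℝ) ^ 2 ≤ (D : ℝ) * (D : ℝ) * (W : ℝ) := by exact_mod_cast hF3
  have r4 : (n : ℝ) * ((D : ℝ) * (D : ℝ)) + 2 * (Q : ℝ) ≤ 3 * (n : ℝ) * (T : ℝ) := by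
    exact_mod_cast hv
  have r5 : (2 * (m : ℝ)) ^ 2 ≤ (n : ℝ) * (Q : ℝ) := by exact_mod_cast hQm
  have rD : (1 : ℝ) ≤ (D : ℝ) := by exact_mod_cast hD1
  have rn : (1 : ℝ) ≤ (n : ℝ) := by exact_mod_cast hn
  have key1 : (2 * (m : ℝ) + 3 * (T : ℝ)) * ((D : ℝ) * (D : ℝ))
      ≤ (7 * (b : ℝ) + (D : ℝ) * (D : ℝ)) * ((D : ℝ) * (D : ℝ)) := by
    nlinarith [mul_le_mul_of_nonneg_right r1 (by positivity : (0:ℝ) ≤ (D:ℝ) * (D:ℝ)),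
      mul_le_mul_of_nonneg_right r2 (by positivity : (0:ℝ) ≤ (D:ℝ) * (D:ℝ)),
      r3, sq_nonneg (2 * (S:ℝ) - (D:ℝ) * (D:ℝ))]
  have key2 : 2 * (m : ℝ) + 3 * (T : ℝ) ≤ 7 * (b : ℝ) + (D : ℝ) * (D : ℝ) :=
    le_of_mul_le_mul_right key1 (by positivity)
  have key3 : 2 * (m : ℝ) * (n : ℝ) ^ 2 + 8 * (m : ℝ) ^ 2 ≤ 7 * (b : ℝ) * (n : ℝ) ^ 2 := by
    nlinarith [mul_le_mul_of_nonneg_right key2 (by positivity : (0:ℝ) ≤ (n:ℝ) ^ 2),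
      mul_le_mul_of_nonneg_right r4 (by positivity : (0:ℝ) ≤ (n:ℝ)), r5]
  have heq : 2 * (m : ℝ) / 7 + 8 * (m : ℝ) ^ 2 / (7 * (n : ℝ) ^ 2)
      = (2 * (m : ℝ) * (n : ℝ) ^ 2 + 8 * (m : ℝ) ^ 2) / (7 * (n : ℝ) ^ 2) := by
    field_simp
  rw [heq, div_le_iff₀ (by positivity : (0:ℝ) < 7 * (n : ℝ) ^ 2)]
  linarith [key3]
end

section
/- Let G be the complete 3-partite graph on n = 3m vertices with three parts of size m each. Then G cannot be made bipartite by deleting fewer than m^2 = n^2/9 edges; that is, e(G) - b(G) ≥ n^2/9. -/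
open Finset

/-- The complete 3-partite graph on `n = 3m` vertices with three parts of size `m`
cannot be made bipartite by deleting fewer than `m² = n²/9` edges:
`e(G) - b(G) ≥ n²/9`. -/
theorem complete_tripartite_max_cut {V : Type*} [Fintype V] [DecidableEq V]
    (G : SimpleGraph V) [DecidableRel G.Adj] (m : ℕ) (hn : Fintype.card V = 3 * m)
    (f : V → Fin 3)
    (hparts : ∀ i : Fin 3, (Finset.univ.filter fun v => f v = i).card = m)
    (hadj : ∀ u v : V, G.Adj u v ↔ f u ≠ f v) :
    (m : ℝ) ^ 2 ≤ (G.edgeFinset.card : ℝ) - G.maxCut := by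
  classical
  -- degrees
  have hdeg : ∀ v, G.degree v = 2 * m := by
    intro v
    have hnb : G.neighborFinset v = Finset.univ.filter fun u => ¬ f u = f v := by
      ext u
      simp only [SimpleGraph.mem_neighborFinset, hadj, Finset.mem_filter, Finset.mem_univ,
        true_and, ne_comm, ne_eq]
    have h1 : (Finset.univ.filter fun u => f u = f v).card
        + (Finset.univ.filter fun u => ¬ f u = f v).card = Fintype.card V :=
      Finset.card_filter_add_card_filter_not _
    rw [SimpleGraph.degree, hnb]
    have := hparts (f v)
    omega
  have hedges : G.edgeFinset.card = 3 * m ^ 2 := by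
    have h2 := G.sum_degrees_eq_twice_card_edges
    rw [Finset.sum_congr rfl fun v _ => hdeg v, Finset.sum_const, Finset.card_univ, hn] at h2
    simp only [smul_eq_mul] at h2
    nlinarith [h2]
  -- cut bound
  have hcut : ∀ S : Finset V, G.cutSize S ≤ 2 * m ^ 2 := by
    intro S
    set a : Fin 3 → ℕ := fun i => (S.filter fun v => f v = i).card with ha
    set b : Fin 3 → ℕ := fun i => (Sᶜ.filter fun v => f v = i).card with hb
    have hab : ∀ i, a i + b i = m := by
      intro i
      have hu : (Finset.univ.filter fun v => f v = i)
          = (S.filter fun v => f v = i) ∪ (Sᶜ.filter fun v => f v = i) := by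
        ext x
        simp only [Finset.mem_filter, Finset.mem_univ, true_and, Finset.mem_union,
          Finset.mem_compl]
        tauto
      have hdisj : Disjoint (S.filter fun v => f v = i) (Sᶜ.filter fun v => f v = i) :=
        (Finset.disjoint_filter_filter (disjoint_compl_right))
      have := hparts i
      rw [hu, Finset.card_union_of_disjoint hdisj] at this
      exact this
    have hsa : ∑ i, a i = S.card :=
      (Finset.card_eq_sum_card_fiberwise (f := f) (t := Finset.univ)
        (fun v _ => Finset.mem_univ _)).symm
    have hsb : ∑ i, b i = Sᶜ.card :=
      (Finset.card_eq_sum_card_fiberwise (f := f) (t := Finset.univ)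
        (fun v _ => Finset.mem_univ _)).symm
    have hsplit : G.cutSize S + ((S ×ˢ Sᶜ).filter fun p => f p.1 = f p.2).card
        = S.card * Sᶜ.card := by
      have h3 := Finset.card_filter_add_card_filter_not
        (s := S ×ˢ Sᶜ) (p := fun p : V × V => G.Adj p.1 p.2)
      rw [Finset.card_product] at h3
      rw [SimpleGraph.cutSize]
      have h4 : ((S ×ˢ Sᶜ).filter fun p : V × V => ¬ G.Adj p.1 p.2)
          = (S ×ˢ Sᶜ).filter fun p => f p.1 = f p.2 :=
        Finset.filter_congr fun p _ => by simp [hadj]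
      rw [h4] at h3
      exact h3
    have hfib : ((S ×ˢ Sᶜ).filter fun p => f p.1 = f p.2).card = ∑ i, a i * b i := by
      rw [Finset.card_eq_sum_card_fiberwise (f := fun p : V × V => f p.1) (t := Finset.univ)
        (fun p _ => Finset.mem_univ _)]
      refine Finset.sum_congr rfl fun i _ => ?_
      have : (((S ×ˢ Sᶜ).filter fun p => f p.1 = f p.2).filter fun p : V × V => f p.1 = i)
          = (S.filter fun v => f v = i) ×ˢ (Sᶜ.filter fun v => f v = i) := by
        ext ⟨u, w⟩
        simp only [Finset.mem_filter, Finset.mem_product]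
        constructor
        · rintro ⟨⟨⟨hu, hw⟩, he⟩, hi⟩
          exact ⟨⟨hu, hi⟩, ⟨hw, he ▸ hi⟩⟩
        · rintro ⟨⟨hu, hi⟩, ⟨hw, hj⟩⟩
          exact ⟨⟨⟨hu, hw⟩, hi.trans hj.symm⟩, hi⟩
      rw [this, Finset.card_product]
    have hst : S.card + Sᶜ.card = 3 * m := by
      rw [Finset.card_add_card_compl, hn]
    -- pass to reals
    have key : (G.cutSize S : ℝ) ≤ 2 * m ^ 2 := by
      have e1 : (G.cutSize S : ℝ) + ∑ i, (a i : ℝ) * (b i : ℝ)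
          = (S.card : ℝ) * (Sᶜ.card : ℝ) := by
        exact_mod_cast congrArg (Nat.cast (R := ℝ)) (hfib ▸ hsplit)
      have e2 : ∀ i, (a i : ℝ) + (b i : ℝ) = m := fun i => by exact_mod_cast hab i
      have e3 : (∑ i, (a i : ℝ)) = S.card := by exact_mod_cast hsa
      have e4 : (∑ i, (b i : ℝ)) = Sᶜ.card := by exact_mod_cast hsb
      have e5 : (S.card : ℝ) + Sᶜ.card = 3 * m := by exact_mod_cast hst
      rw [Fin.sum_univ_three] at e1 e3 e4
      have p1 : (0:ℝ) ≤ a 1 + a 2 := by positivity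
      rcases le_total ((a 1 : ℝ) + a 2) m with h | h
      · nlinarith [mul_nonneg (Nat.cast_nonneg (α := ℝ) (a 1)) (Nat.cast_nonneg (α := ℝ) (a 2)),
          mul_nonneg (Nat.cast_nonneg (α := ℝ) (b 0)) (sub_nonneg.2 h),
          e2 0, e2 1, e2 2]
      · nlinarith [mul_nonneg (Nat.cast_nonneg (α := ℝ) (b 1)) (Nat.cast_nonneg (α := ℝ) (b 2)),
          mul_nonneg (Nat.cast_nonneg (α := ℝ) (a 0)) (sub_nonneg.2 h),
          e2 0, e2 1, e2 2]
    exact_mod_cast key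
  have hmax : G.maxCut ≤ 2 * m ^ 2 := Finset.sup_le fun S _ => hcut S
  have h5 : (G.maxCut : ℝ) ≤ 2 * m ^ 2 := by exact_mod_cast hmax
  rw [hedges]
  push_cast
  linarith
end

section
/- Let G be a K4-free graph with e edges, let v be a vertex of G with degree d(v) > 0, and let e_v be the number of edges spanned by the neighborhood N(v). Then b(G) ≥ (e - e_v)/2 + 4e_v^2/d(v)^2. -/
open Finset

namespace K4Aux

open SimpleGraph

variable {V : Type*} [Fintype V] [DecidableEq V] (G : SimpleGraph V) [DecidableRel G.Adj]

/-- The crossing predicate: an edge crosses the cut `(S, Sᶜ)`. -/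
def crossP (S : Finset V) (e : Sym2 V) : Prop := e ∉ S.sym2 ∧ e ∉ Sᶜ.sym2

instance (S : Finset V) : DecidablePred (crossP S) := fun e => by
  unfold crossP; infer_instance

lemma crossP_mk {S : Finset V} {a b : V} :
    crossP S s(a, b) ↔ ¬(a ∈ S ∧ b ∈ S) ∧ ¬(a ∉ S ∧ b ∉ S) := by
  simp [crossP, Finset.mk_mem_sym2_iff]

lemma card_prod_filter (A B : Finset V) :
    ((A ×ˢ B).filter fun p : V × V => G.Adj p.1 p.2).card
      = ∑ a ∈ A, (B.filter (G.Adj a)).card := by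
  rw [Finset.card_filter, Finset.sum_product]
  exact Finset.sum_congr rfl fun a _ => (Finset.card_filter _ _).symm

/-- `cutSize` counts crossing edges. -/
lemma cutSize_eq (S : Finset V) :
    G.cutSize S = (G.edgeFinset.filter (crossP S)).card := by
  refine Finset.card_bij (fun p _ => s(p.1, p.2)) ?_ ?_ ?_
  · rintro ⟨a, b⟩ hab
    simp only [Finset.mem_filter, Finset.mem_product, Finset.mem_compl] at hab
    obtain ⟨⟨haS, hbS⟩, hadj⟩ := hab
    rw [Finset.mem_filter, SimpleGraph.mem_edgeFinset, SimpleGraph.mem_edgeSet]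
    exact ⟨hadj, crossP_mk.2 ⟨fun h => hbS h.2, fun h => h.1 haS⟩⟩
  · rintro ⟨a, b⟩ ha ⟨c, d⟩ hc h
    simp only [Finset.mem_filter, Finset.mem_product, Finset.mem_compl] at ha hc
    rw [Sym2.eq_iff] at h
    rcases h with ⟨rfl, rfl⟩ | ⟨rfl, rfl⟩
    · rfl
    · exact absurd ha.1.1 hc.1.2
  · intro e he
    induction e using Sym2.inductionOn with
    | _ a b =>
      rw [Finset.mem_filter, SimpleGraph.mem_edgeFinset, SimpleGraph.mem_edgeSet] at he
      obtain ⟨hadj, hcr⟩ := he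
      rw [crossP_mk] at hcr
      by_cases haS : a ∈ S
      · have hbS : b ∉ S := fun hb => hcr.1 ⟨haS, hb⟩
        exact ⟨(a, b), by simp [Finset.mem_product, haS, hbS, hadj], rfl⟩
      · have hbS : b ∈ S := by by_contra hb; exact hcr.2 ⟨haS, hb⟩
        exact ⟨(b, a), by simp [Finset.mem_product, haS, hbS, hadj.symm], Sym2.eq_swap⟩

/-- Toggle a vertex in a set. -/
def tog (x : V) (T : Finset V) : Finset V := if x ∈ T then T.erase x else insert x T

lemma tog_mem_powerset {M : Finset V} {x : V} (hx : x ∈ M) {T : Finset V}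
    (hT : T ∈ M.powerset) : tog x T ∈ M.powerset := by
  rw [Finset.mem_powerset] at hT ⊢
  unfold tog
  split
  · exact (Finset.erase_subset _ _).trans hT
  · exact Finset.insert_subset hx hT

lemma mem_tog_self (x : V) (T : Finset V) : x ∈ tog x T ↔ x ∉ T := by
  unfold tog; split <;> simp_all

lemma mem_tog_ne {x y : V} (h : y ≠ x) (T : Finset V) : y ∈ tog x T ↔ y ∈ T := by
  unfold tog; split <;> simp [Finset.mem_erase, Finset.mem_insert, h]

lemma tog_tog (x : V) (T : Finset V) : tog x (tog x T) = T := by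
  ext y
  by_cases h : y = x
  · subst h; rw [mem_tog_self, mem_tog_self]; tauto
  · rw [mem_tog_ne h, mem_tog_ne h]

/-- If toggling `x ∈ M` flips the predicate `p`, then exactly half of the subsets of `M`
satisfy `p`. -/
lemma toggle_count (M : Finset V) (x : V) (hx : x ∈ M) (p : Finset V → Prop)
    [DecidablePred p] (hp : ∀ T ∈ M.powerset, (p (tog x T) ↔ ¬ p T)) :
    2 * (M.powerset.filter p).card = 2 ^ M.card := by
  have key : (M.powerset.filter p).card = (M.powerset.filter (fun T => ¬ p T)).card := by
    refine Finset.card_bij (fun T _ => tog x T) ?_ ?_ ?_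
    · intro T hT
      rw [Finset.mem_filter] at hT ⊢
      exact ⟨tog_mem_powerset hx hT.1, fun hc => ((hp _ hT.1).1 hc) hT.2⟩
    · intro T1 h1 T2 h2 h
      have := congrArg (tog x) h
      rwa [tog_tog, tog_tog] at this
    · intro T hT
      rw [Finset.mem_filter] at hT
      refine ⟨tog x T, ?_, tog_tog x T⟩
      rw [Finset.mem_filter]
      exact ⟨tog_mem_powerset hx hT.1, (hp _ hT.1).2 hT.2⟩
  have htot := Finset.card_filter_add_card_filter_not (s := M.powerset) p
  rw [Finset.card_powerset] at htot
  omega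

section StepB

variable {G}

/-- For an edge inside `D`, crossing `S0 ∪ T` is the same as crossing `S0`, for `T ⊆ Dᶜ`. -/
lemma count_inside {D S0 : Finset V} (hS0 : S0 ⊆ D) {e : Sym2 V}
    (hin : e ∈ D.sym2) :
    ((Dᶜ.powerset.filter fun T => crossP (S0 ∪ T) e)).card
      = if crossP S0 e then 2 ^ Dᶜ.card else 0 := by
  have hconst : ∀ T ∈ Dᶜ.powerset, (crossP (S0 ∪ T) e ↔ crossP S0 e) := by
    intro T hT
    rw [Finset.mem_powerset] at hT
    induction e using Sym2.inductionOn with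
    | _ a b =>
      rw [Finset.mk_mem_sym2_iff] at hin
      have ha : a ∈ S0 ∪ T ↔ a ∈ S0 := by
        simp only [Finset.mem_union]
        exact ⟨fun h => h.resolve_right fun h' => (Finset.mem_compl.1 (hT h')) hin.1,
          Or.inl⟩
      have hb : b ∈ S0 ∪ T ↔ b ∈ S0 := by
        simp only [Finset.mem_union]
        exact ⟨fun h => h.resolve_right fun h' => (Finset.mem_compl.1 (hT h')) hin.2,
          Or.inl⟩
      rw [crossP_mk, crossP_mk, ha, hb]
  split
  · next h =>
    rw [Finset.filter_true_of_mem (fun T hT => (hconst T hT).2 h), Finset.card_powerset]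
  · next h =>
    rw [Finset.filter_false_of_mem (fun T hT hc => h ((hconst T hT).1 hc))]
    exact Finset.card_empty

/-- For an edge not inside `D`, exactly half of the subsets `T ⊆ Dᶜ` make it cross. -/
lemma count_outside {D S0 : Finset V} (hS0 : S0 ⊆ D) {e : Sym2 V}
    (he : e ∈ G.edgeFinset) (hout : e ∉ D.sym2) :
    2 * ((Dᶜ.powerset.filter fun T => crossP (S0 ∪ T) e)).card = 2 ^ Dᶜ.card := by
  induction e using Sym2.inductionOn with
  | _ a b =>
    simp only [SimpleGraph.mem_edgeFinset, SimpleGraph.mem_edgeSet] at he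
    have hne : a ≠ b := he.ne
    rw [Finset.mk_mem_sym2_iff] at hout
    push_neg at hout
    -- pick an endpoint x ∉ D; wlog via two symmetric cases
    have main : ∀ x y : V, x ≠ y → x ∉ D →
        2 * ((Dᶜ.powerset.filter fun T => crossP (S0 ∪ T) s(x, y))).card = 2 ^ Dᶜ.card := by
      intro x y hxy hxD
      refine toggle_count Dᶜ x (Finset.mem_compl.2 hxD) _ ?_
      intro T hT
      rw [Finset.mem_powerset] at hT
      have hxS0 : x ∉ S0 := fun h => hxD (hS0 h)
      have hxmem : x ∈ S0 ∪ tog x T ↔ ¬ (x ∈ S0 ∪ T) := by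
        simp only [Finset.mem_union, mem_tog_self, hxS0, false_or]
      have hymem : y ∈ S0 ∪ tog x T ↔ y ∈ S0 ∪ T := by
        simp only [Finset.mem_union, mem_tog_ne (Ne.symm hxy)]
      rw [crossP_mk, crossP_mk, hxmem, hymem]
      tauto
    by_cases haD : a ∈ D
    · have hbD : b ∉ D := fun h => hout haD h
      have := main b a (Ne.symm hne) hbD
      convert this using 3
      ext T
      rw [Sym2.eq_swap]
    · exact main a b hne haD

/-- The key averaging identity over all subsets of `Dᶜ`. -/
lemma sumB {D S0 : Finset V} (hS0 : S0 ⊆ D) :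
    2 * ∑ T ∈ Dᶜ.powerset, G.cutSize (S0 ∪ T)
      = 2 * 2 ^ Dᶜ.card * (G.edgeFinset.filter fun e => e ∈ D.sym2 ∧ crossP S0 e).card
        + 2 ^ Dᶜ.card * (G.edgeFinset.filter fun e => ¬ e ∈ D.sym2).card := by
  have step1 : ∑ T ∈ Dᶜ.powerset, G.cutSize (S0 ∪ T)
      = ∑ e ∈ G.edgeFinset, ((Dᶜ.powerset.filter fun T => crossP (S0 ∪ T) e)).card := by
    simp only [cutSize_eq, Finset.card_filter]
    rw [Finset.sum_comm]
  rw [step1]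
  rw [← Finset.sum_filter_add_sum_filter_not G.edgeFinset (fun e => e ∈ D.sym2)]
  rw [Nat.mul_add]
  congr 1
  · rw [Finset.mul_sum]
    have : ∀ e ∈ G.edgeFinset.filter (fun e => e ∈ D.sym2),
        2 * ((Dᶜ.powerset.filter fun T => crossP (S0 ∪ T) e)).card
          = 2 * (if crossP S0 e then 2 ^ Dᶜ.card else 0) := by
      intro e hee
      rw [Finset.mem_filter] at hee
      rw [count_inside hS0 hee.2]
    rw [Finset.sum_congr rfl this]
    rw [← Finset.mul_sum, ← Finset.sum_filter, Finset.sum_const, smul_eq_mul,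
      Finset.filter_filter]
    ring
  · have h2 : ∑ e ∈ G.edgeFinset.filter (fun e => ¬ e ∈ D.sym2),
        2 * ((Dᶜ.powerset.filter fun T => crossP (S0 ∪ T) e)).card
        = ∑ _e ∈ G.edgeFinset.filter (fun e => ¬ e ∈ D.sym2), 2 ^ Dᶜ.card := by
      refine Finset.sum_congr rfl fun e hee => ?_
      rw [Finset.mem_filter] at hee
      exact count_outside hS0 hee.1 hee.2
    rw [Finset.mul_sum, h2, Finset.sum_const, smul_eq_mul, mul_comm]

end StepB

section StepA

variable {G}

lemma no_K4_pair (hG : G.CliqueFree 4) {v u w1 w2 : V} (hu : G.Adj v u)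
    (h1 : G.Adj v w1) (h2 : G.Adj v w2) (hu1 : G.Adj u w1) (hu2 : G.Adj u w2)
    (h12 : G.Adj w1 w2) : False := by
  refine hG {v, u, w1, w2} ⟨?_, ?_⟩
  · intro a ha b hb hab
    simp only [Finset.coe_insert, Set.mem_insert_iff, Finset.coe_singleton,
      Set.mem_singleton_iff] at ha hb
    rcases ha with rfl | rfl | rfl | rfl <;> rcases hb with rfl | rfl | rfl | rfl <;>
      first
        | exact absurd rfl hab
        | assumption
        | exact hu.symm
        | exact h1.symm
        | exact h2.symm
        | exact hu1.symm
        | exact hu2.symm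
        | exact h12.symm
  · have hvu := hu.ne
    have hv1 := h1.ne
    have hv2 := h2.ne
    have hu1' := hu1.ne
    have hu2' := hu2.ne
    have h12' := h12.ne
    rw [Finset.card_insert_of_notMem (by simp [hvu, hv1, hv2]),
      Finset.card_insert_of_notMem (by simp [hu1', hu2']),
      Finset.card_insert_of_notMem (by simp [h12']), Finset.card_singleton]

/-- Double counting adjacent ordered pairs inside `D`. -/
lemma pairs_eq_twice (D : Finset V) :
    ((D ×ˢ D).filter fun p : V × V => G.Adj p.1 p.2).card
      = 2 * (G.edgeFinset.filter fun e => e ∈ D.sym2).card := by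
  rw [Finset.card_eq_sum_card_fiberwise (f := fun p : V × V => s(p.1, p.2))
      (t := G.edgeFinset.filter fun e => e ∈ D.sym2) ?hmap]
  case hmap =>
    rintro ⟨a, b⟩ hab
    simp only [Finset.mem_coe, Finset.mem_filter, Finset.mem_product] at hab
    simp only [Finset.mem_coe]
    rw [Finset.mem_filter, SimpleGraph.mem_edgeFinset, SimpleGraph.mem_edgeSet,
      Finset.mk_mem_sym2_iff]
    exact ⟨hab.2, hab.1⟩
  have hfib : ∀ e ∈ G.edgeFinset.filter fun e => e ∈ D.sym2,
      (((D ×ˢ D).filter fun p : V × V => G.Adj p.1 p.2).filter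
        (fun p => s(p.1, p.2) = e)).card = 2 := by
    intro e he
    induction e using Sym2.inductionOn with
    | _ a b =>
      rw [Finset.mem_filter, SimpleGraph.mem_edgeFinset, SimpleGraph.mem_edgeSet,
        Finset.mk_mem_sym2_iff] at he
      obtain ⟨hadj, haD, hbD⟩ := he
      have hab : a ≠ b := hadj.ne
      have hset : (((D ×ˢ D).filter fun p : V × V => G.Adj p.1 p.2).filter
          (fun p => s(p.1, p.2) = s(a, b))) = {(a, b), (b, a)} := by
        ext ⟨c, d⟩
        simp only [Finset.mem_filter, Finset.mem_product, Finset.mem_insert,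
          Finset.mem_singleton, Prod.mk.injEq, Sym2.eq_iff]
        constructor
        · rintro ⟨_, (⟨rfl, rfl⟩ | ⟨rfl, rfl⟩)⟩
          · exact Or.inl ⟨rfl, rfl⟩
          · exact Or.inr ⟨rfl, rfl⟩
        · rintro (⟨rfl, rfl⟩ | ⟨rfl, rfl⟩)
          · exact ⟨⟨⟨haD, hbD⟩, hadj⟩, Or.inl ⟨rfl, rfl⟩⟩
          · exact ⟨⟨⟨hbD, haD⟩, hadj.symm⟩, Or.inr ⟨rfl, rfl⟩⟩
      rw [hset, Finset.card_insert_of_notMem (by simp [hab]), Finset.card_singleton]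
  rw [Finset.sum_congr rfl hfib, Finset.sum_const, smul_eq_mul, mul_comm]

/-- Sum of `H`-degrees equals twice the edges spanned by `D`. -/
lemma sum_f (D : Finset V) :
    ∑ w ∈ D, (D.filter (G.Adj w)).card = 2 * G.spanEdges D := by
  rw [← card_prod_filter, pairs_eq_twice]
  rfl

lemma neighbor_inter_eq (u : V) (D : Finset V) :
    G.neighborFinset u ∩ D = D.filter (G.Adj u) := by
  ext w
  simp [SimpleGraph.mem_neighborFinset, and_comm]

/-- The double-sum swap. -/
lemma sum_g (D : Finset V) :
    ∑ u ∈ D, ∑ w ∈ G.neighborFinset u ∩ D, (D.filter (G.Adj w)).card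
      = ∑ w ∈ D, ((D.filter (G.Adj w)).card) ^ 2 := by
  have h1 : ∀ u, ∑ w ∈ G.neighborFinset u ∩ D, (D.filter (G.Adj w)).card
      = ∑ w ∈ D, if G.Adj u w then (D.filter (G.Adj w)).card else 0 := by
    intro u
    rw [neighbor_inter_eq, Finset.sum_filter]
  simp only [h1]
  rw [Finset.sum_comm]
  refine Finset.sum_congr rfl fun w _ => ?_
  rw [← Finset.sum_filter, Finset.sum_const, smul_eq_mul]
  have : D.filter (fun u => G.Adj u w) = D.filter (G.Adj w) := by
    ext u
    simp [G.adj_comm]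
  rw [this, sq]

/-- The crossing edges inside `D` at `S0 = N(u) ∩ N(v)` are counted by the `H`-degree sum. -/
lemma c1_eq (hG : G.CliqueFree 4) {v u : V} (hu : G.Adj v u) :
    (G.edgeFinset.filter fun e =>
        e ∈ (G.neighborFinset v).sym2 ∧
          crossP (G.neighborFinset u ∩ G.neighborFinset v) e).card
      = ∑ w ∈ G.neighborFinset u ∩ G.neighborFinset v,
          ((G.neighborFinset v).filter (G.Adj w)).card := by
  set D := G.neighborFinset v with hD
  set S0 := G.neighborFinset u ∩ D with hS0
  have hmemS0 : ∀ w, w ∈ S0 → G.Adj u w ∧ G.Adj v w := by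
    intro w hw
    rw [hS0, Finset.mem_inter, SimpleGraph.mem_neighborFinset,
      SimpleGraph.mem_neighborFinset] at hw
    exact hw
  have hind : ∀ a ∈ S0, ∀ b ∈ S0, ¬ G.Adj a b := by
    intro a ha b hb hab
    obtain ⟨hua, hva⟩ := hmemS0 a ha
    obtain ⟨hub, hvb⟩ := hmemS0 b hb
    exact no_K4_pair hG hu hva hvb hua hub hab
  rw [← card_prod_filter]
  refine (Finset.card_bij (fun p _ => s(p.1, p.2)) ?_ ?_ ?_).symm
  · rintro ⟨w, x⟩ hwx
    simp only [Finset.mem_filter, Finset.mem_product] at hwx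
    obtain ⟨⟨hwS0, hxD⟩, hadj⟩ := hwx
    have hxS0 : x ∉ S0 := fun hx => hind w hwS0 x hx hadj
    rw [Finset.mem_filter, SimpleGraph.mem_edgeFinset, SimpleGraph.mem_edgeSet,
      Finset.mk_mem_sym2_iff]
    exact ⟨hadj, ⟨Finset.inter_subset_right hwS0, hxD⟩,
      crossP_mk.2 ⟨fun h => hxS0 h.2, fun h => h.1 hwS0⟩⟩
  · rintro ⟨w, x⟩ hwx ⟨w', x'⟩ hwx' h
    simp only [Finset.mem_filter, Finset.mem_product] at hwx hwx'
    rw [Sym2.eq_iff] at h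
    rcases h with ⟨h1, h2⟩ | ⟨h1, h2⟩
    · rw [Prod.mk.injEq]
      exact ⟨h1, h2⟩
    · subst h1
      subst h2
      exact absurd hwx.2 (hind w hwx.1.1 x hwx'.1.1)
  · intro e he
    induction e using Sym2.inductionOn with
    | _ a b =>
      rw [Finset.mem_filter, SimpleGraph.mem_edgeFinset, SimpleGraph.mem_edgeSet,
        Finset.mk_mem_sym2_iff] at he
      obtain ⟨hadj, ⟨haD, hbD⟩, hcr⟩ := he
      rw [crossP_mk] at hcr
      by_cases haS : a ∈ S0
      · exact ⟨(a, b),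
          Finset.mem_filter.2 ⟨Finset.mem_product.2 ⟨haS, hbD⟩, hadj⟩, rfl⟩
      · have hbS : b ∈ S0 := by
          by_contra hb
          exact hcr.2 ⟨haS, hb⟩
        exact ⟨(b, a),
          Finset.mem_filter.2 ⟨Finset.mem_product.2 ⟨hbS, haD⟩, hadj.symm⟩, Sym2.eq_swap⟩

end StepA

end K4Aux

/-- If `G` is `K₄`-free with `e` edges and `v` is a vertex of positive degree, with
`e_v` edges spanned by `N(v)`, then `b(G) ≥ (e - e_v)/2 + 4 e_v² / d(v)²`. -/
theorem K4_free_neighborhood_max_cut {V : Type*} [Fintype V] [DecidableEq V]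
    (G : SimpleGraph V) [DecidableRel G.Adj] (hG : G.CliqueFree 4) (v : V)
    (hd : 0 < G.degree v) :
    ((G.edgeFinset.card : ℝ) - (G.spanEdges (G.neighborFinset v) : ℝ)) / 2 +
        4 * (G.spanEdges (G.neighborFinset v) : ℝ) ^ 2 / (G.degree v : ℝ) ^ 2 ≤
      G.maxCut := by
  classical
  open K4Aux in
  set D := G.neighborFinset v with hD
  have hdeg : G.degree v = D.card := rfl
  set f : V → ℕ := fun w => (D.filter (G.Adj w)).card with hf
  have hDne : D.Nonempty := Finset.card_pos.1 (hdeg ▸ hd)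
  obtain ⟨u, huD, hmax⟩ :=
    Finset.exists_max_image D (fun u => ∑ w ∈ G.neighborFinset u ∩ D, f w) hDne
  have hvu : G.Adj v u := by rwa [hD, SimpleGraph.mem_neighborFinset] at huD
  set S0 := G.neighborFinset u ∩ D with hS0def
  have hS0D : S0 ⊆ D := Finset.inter_subset_right
  set c1 := (G.edgeFinset.filter fun e => e ∈ D.sym2 ∧ K4Aux.crossP S0 e).card with hc1
  set ev := G.spanEdges D with hev
  set eo := (G.edgeFinset.filter fun e => ¬ e ∈ D.sym2).card with heo
  -- Step A
  have hc1g : c1 = ∑ w ∈ S0, f w := K4Aux.c1_eq hG hvu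
  have hsumf : ∑ w ∈ D, f w = 2 * ev := K4Aux.sum_f D
  have hswap : ∑ u' ∈ D, ∑ w ∈ G.neighborFinset u' ∩ D, f w = ∑ w ∈ D, (f w) ^ 2 :=
    K4Aux.sum_g D
  have hCS : (∑ w ∈ D, f w) ^ 2 ≤ D.card * ∑ w ∈ D, (f w) ^ 2 :=
    sq_sum_le_card_mul_sum_sq
  have hmax' : ∑ w ∈ D, (f w) ^ 2 ≤ D.card * c1 := by
    rw [← hswap, hc1g]
    calc ∑ u' ∈ D, ∑ w ∈ G.neighborFinset u' ∩ D, f w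
        ≤ ∑ _u' ∈ D, ∑ w ∈ S0, f w := Finset.sum_le_sum fun u' hu' => hmax u' hu'
      _ = D.card * ∑ w ∈ S0, f w := by rw [Finset.sum_const, smul_eq_mul]
  have hA : 4 * ev ^ 2 ≤ D.card ^ 2 * c1 := by
    have h1 : (2 * ev) ^ 2 ≤ D.card * (D.card * c1) :=
      (hsumf ▸ hCS).trans (Nat.mul_le_mul_left _ hmax')
    nlinarith [h1]
  -- Step B
  have hB := K4Aux.sumB (G := G) hS0D
  have hkpos : 0 < Dᶜ.card := by
    refine Finset.card_pos.2 ⟨v, Finset.mem_compl.2 ?_⟩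
    simp [hD]
  have hsum_le : ∑ T ∈ Dᶜ.powerset, G.cutSize (S0 ∪ T) ≤ 2 ^ Dᶜ.card * G.maxCut := by
    calc ∑ T ∈ Dᶜ.powerset, G.cutSize (S0 ∪ T)
        ≤ ∑ _T ∈ Dᶜ.powerset, G.maxCut :=
          Finset.sum_le_sum fun T _ => Finset.le_sup (Finset.mem_univ _)
      _ = 2 ^ Dᶜ.card * G.maxCut := by
          rw [Finset.sum_const, Finset.card_powerset, smul_eq_mul]
  have hBle : 2 ^ Dᶜ.card * (2 * c1 + eo) ≤ 2 ^ Dᶜ.card * (2 * G.maxCut) := by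
    have h2 := Nat.mul_le_mul_left 2 hsum_le
    rw [hB] at h2
    calc 2 ^ Dᶜ.card * (2 * c1 + eo) = 2 * 2 ^ Dᶜ.card * c1 + 2 ^ Dᶜ.card * eo := by ring
      _ ≤ 2 * (2 ^ Dᶜ.card * G.maxCut) := h2
      _ = 2 ^ Dᶜ.card * (2 * G.maxCut) := by ring
  have hfinal : 2 * c1 + eo ≤ 2 * G.maxCut :=
    Nat.le_of_mul_le_mul_left hBle (by positivity)
  -- edge partition
  have hpart : ev + eo = G.edgeFinset.card := by
    rw [hev, heo, SimpleGraph.spanEdges]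
    exact Finset.card_filter_add_card_filter_not _
  -- pass to the reals
  have hdR : (0 : ℝ) < (D.card : ℝ) := by exact_mod_cast hdeg ▸ hd
  rw [hdeg]
  have hAR : 4 * (ev : ℝ) ^ 2 ≤ (D.card : ℝ) ^ 2 * (c1 : ℝ) := by exact_mod_cast hA
  have hfinalR : 2 * (c1 : ℝ) + (eo : ℝ) ≤ 2 * (G.maxCut : ℝ) := by exact_mod_cast hfinal
  have hpartR : (ev : ℝ) + (eo : ℝ) = (G.edgeFinset.card : ℝ) := by exact_mod_cast hpart
  have hdiv : 4 * (ev : ℝ) ^ 2 / (D.card : ℝ) ^ 2 ≤ (c1 : ℝ) := by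
    rw [div_le_iff₀ (by positivity)]
    nlinarith [hAR]
  linarith
end
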